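/- In the adding-voters construction (candidates B ∪ {w,x}; k−1 registered voters approving only x; unregistered voter w_i approving B − N_c[b_i] then w), for any subset W' of the unregistered voters with ‖W'‖ = k corresponding to a dominating set of G: in the election with voters V ∪ W' there are 2k−1 voters, candidate w has overall approval score k (a strict majority), every other candidate has overall approval score at most k−1, and w is the unique fallback voting winner. -/

import Mathlib

/- Fallback voting framework.  A ballot is the linearly ordered list of a voter's
approved candidates (most preferred first); an election is a list of ballots. -/
namespace FV

variable {α : Type*} [DecidableEq α]

/-- The level-`i` score of candidate `c`: the number of voters who approve `c`
and rank `c` among their top `i` approved candidates. -/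
def levelScore (V : List (List α)) (i : ℕ) (c : α) : ℕ :=
  (V.filter (fun b => decide (c ∈ b.take i))).length

/-- The overall approval score of candidate `c`. -/
def score (V : List (List α)) (c : α) : ℕ :=
  (V.filter (fun b => decide (c ∈ b))).length

/-- `c` has a strict majority of approvals at level `i`. -/
def MajAt (V : List (List α)) (i : ℕ) (c : α) : Prop :=
  2 * levelScore V i c > V.length

/-- `c` is a fallback voting winner of the election with candidate set `Cs`
and voter list `V`:  either at the first level (up to `‖Cs‖`) at which some
candidate attains a strict majority, `c` has a strict majority and maximal
level score among strict-majority candidates; or no candidate ever attains a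
strict majority and `c` has maximal overall approval score. -/
def FVWinner (Cs : Finset α) (V : List (List α)) (c : α) : Prop :=
  c ∈ Cs ∧
    ((∃ i, 1 ≤ i ∧ i ≤ Cs.card ∧ MajAt V i c ∧
        (∀ j, j < i → ∀ d ∈ Cs, ¬ MajAt V j d) ∧
        (∀ d ∈ Cs, MajAt V i d → levelScore V i d ≤ levelScore V i c)) ∨
     ((∀ i, i ≤ Cs.card → ∀ d ∈ Cs, ¬ MajAt V i d) ∧
        ∀ d ∈ Cs, score V d ≤ score V c))

/-- `c` is the unique fallback voting winner. -/
def UniqueFVWinner (Cs : Finset α) (V : List (List α)) (c : α) : Prop :=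
  FVWinner Cs V c ∧ ∀ d, FVWinner Cs V d → d = c

end FV

/- The adding-voters construction of Erdélyi and Fellows.  Candidates are
`Sum (Fin n) Bool`: `Sum.inl b` is the vertex candidate for `b`, `Sum.inr
true` is `w` and `Sum.inr false` is `x`.  There are `k-1` registered voters
approving only `x`; the unregistered voter `wᵢ` approves the candidates of
`B − N_c[bᵢ]` (in a fixed order given by the enumeration `L`) followed by `w`.
Adding the voters indexed by `S` yields the voter list `addElection`. -/
namespace AV

def wc (n : ℕ) : Sum (Fin n) Bool := Sum.inr true
def xc (n : ℕ) : Sum (Fin n) Bool := Sum.inr false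

/-- The ballot of unregistered voter `wᵢ`. -/
def wballot {n : ℕ} (L : Fin n → List (Fin n)) (i : Fin n) : List (Sum (Fin n) Bool) :=
  (L i).map Sum.inl ++ [wc n]

/-- The voter list after adding the unregistered voters indexed by `S`. -/
def addElection {n : ℕ} (k : ℕ) (L : Fin n → List (Fin n)) (S : Finset (Fin n)) :
    List (List (Sum (Fin n) Bool)) :=
  List.replicate (k - 1) [xc n] ++ (S.sort (· ≤ ·)).map (wballot L)

end AV

section helper
variable {n k : ℕ} {L : Fin n → List (Fin n)} {S : Finset (Fin n)}

lemma len_add : (AV.addElection k L S).length = (k-1) + S.card := by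
  simp [AV.addElection]

lemma level_le_score {α : Type*} [DecidableEq α] (V : List (List α)) (i : ℕ) (c : α) :
    FV.levelScore V i c ≤ FV.score V c := by
  simp only [FV.levelScore, FV.score, ← List.countP_eq_length_filter]
  exact List.countP_mono_left (fun b _ h => by
    simp only [decide_eq_true_eq] at *
    exact List.take_subset _ _ h)

lemma score_w : FV.score (AV.addElection k L S) (AV.wc n) = S.card := by
  simp [FV.score, AV.addElection, List.filter_append, AV.wc, AV.xc, List.filter_map,
    AV.wballot, Function.comp_def]

lemma score_x : FV.score (AV.addElection k L S) (AV.xc n) = k - 1 := by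
  simp [FV.score, AV.addElection, List.filter_append, AV.wc, AV.xc, List.filter_map,
    AV.wballot, Function.comp_def]

lemma score_b (b : Fin n) (v : Fin n) (hv : v ∈ S) (hb : b ∉ L v) :
    FV.score (AV.addElection k L S) (Sum.inl b) < S.card := by
  have : FV.score (AV.addElection k L S) (Sum.inl b)
      = ((S.sort (· ≤ ·)).filter (fun i => decide (b ∈ L i))).length := by
    simp [FV.score, AV.addElection, List.filter_append, AV.wc, AV.xc, List.filter_map,
      AV.wballot, Function.comp_def]
  rw [this, ← Finset.length_sort (α := Fin n) (· ≤ ·)]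
  apply lt_of_le_of_ne (List.length_filter_le _ _)
  intro h
  rw [List.length_filter_eq_length_iff] at h
  have := h v (by simpa using hv)
  simp [hb] at this

lemma levelScore_w_top (hnd : ∀ i, (L i).Nodup) :
    FV.levelScore (AV.addElection k L S) (n+1) (AV.wc n) = S.card := by
  have htake : ∀ i : Fin n, (AV.wballot L i).take (n+1) = AV.wballot L i := by
    intro i
    apply List.take_of_length_le
    simp [AV.wballot]
    have := (hnd i).length_le_card
    simpa using this
  simp only [FV.levelScore, AV.addElection, List.filter_append, List.filter_map,
    Function.comp_def, List.length_append, List.filter_replicate, AV.wc, AV.xc]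
  rw [List.filter_eq_self.2 ?_]
  · simp
  · intro a _
    refine decide_eq_true (inst := _) ?_
    have := htake a
    rw [this]
    simp [AV.wballot, AV.wc]

lemma levelScore_zero {α : Type*} [DecidableEq α] (V : List (List α)) (c : α) :
    FV.levelScore V 0 c = 0 := by
  simp [FV.levelScore]

end helper


/-- adding the `k` unregistered voters corresponding to a
dominating set `S` of size `k` yields an election with `2k-1` voters in which
`w` has overall approval score `k` (a strict majority), every other candidate
has overall score at most `k-1`, and `w` is the unique fallback winner. -/
theorem fv_adding_voters_dominating_set_makes_w_win {n k : ℕ} (hk : 0 < k)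
    (G : SimpleGraph (Fin n)) [DecidableRel G.Adj]
    (L : Fin n → List (Fin n))
    (hnd : ∀ i, (L i).Nodup)
    (hmem : ∀ i b, b ∈ L i ↔ ¬ (b = i ∨ G.Adj i b))
    (S : Finset (Fin n)) (hcard : S.card = k)
    (hdom : ∀ u, ∃ v ∈ S, u = v ∨ G.Adj v u) :
    (AV.addElection k L S).length = 2 * k - 1 ∧
    FV.score (AV.addElection k L S) (AV.wc n) = k ∧
    2 * FV.score (AV.addElection k L S) (AV.wc n) > (AV.addElection k L S).length ∧
    (∀ c, c ≠ AV.wc n → FV.score (AV.addElection k L S) c ≤ k - 1) ∧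
    FV.UniqueFVWinner Finset.univ (AV.addElection k L S) (AV.wc n) := by
  set V := AV.addElection k L S with hV
  have hlen : V.length = 2 * k - 1 := by rw [hV, len_add, hcard]; omega
  have hsw : FV.score V (AV.wc n) = k := by rw [hV, score_w, hcard]
  have hmaj : 2 * FV.score V (AV.wc n) > V.length := by rw [hsw, hlen]; omega
  have hother : ∀ c, c ≠ AV.wc n → FV.score V c ≤ k - 1 := by
    intro c hc
    match c with
    | Sum.inr true => exact absurd rfl hc
    | Sum.inr false =>
        have : FV.score V (AV.xc n) = k - 1 := score_x (k := k)
        exact le_of_eq this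
    | Sum.inl b =>
        obtain ⟨v, hvS, hv⟩ := hdom b
        have hbv : b ∉ L v := fun h => ((hmem v b).1 h) hv
        have := score_b (k := k) b v hvS hbv
        rw [hcard] at this; rw [hV]; omega
  -- no majority for others at any level
  have hnomajother : ∀ i, ∀ d, d ≠ AV.wc n → ¬ FV.MajAt V i d := by
    intro i d hd hM
    have h1 : FV.levelScore V i d ≤ FV.score V d := level_le_score V i d
    have h2 := hother d hd
    unfold FV.MajAt at hM
    omega
  have hcardU : (Finset.univ : Finset (Sum (Fin n) Bool)).card = n + 2 := by
    simp [Fintype.card_sum]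
  have hlw : FV.levelScore V (n+1) (AV.wc n) = k := by
    rw [hV, levelScore_w_top hnd, hcard]
  have hwtop : FV.MajAt V (n+1) (AV.wc n) := by
    unfold FV.MajAt
    rw [hlw, hlen]
    omega
  have hP : ∃ i, 1 ≤ i ∧ FV.MajAt V i (AV.wc n) := ⟨n+1, by omega, hwtop⟩
  classical
  let i0 := Nat.find hP
  have hi0 := Nat.find_spec hP
  have hi0le : i0 ≤ n + 1 := Nat.find_le ⟨by omega, hwtop⟩
  have hnomaj0 : ∀ c : Sum (Fin n) Bool, ¬ FV.MajAt V 0 c := by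
    intro c hM
    unfold FV.MajAt at hM
    rw [levelScore_zero, hlen] at hM
    omega
  have hwwin : FV.FVWinner Finset.univ V (AV.wc n) := by
    refine ⟨Finset.mem_univ _, Or.inl ⟨i0, hi0.1, by omega, hi0.2, ?_, ?_⟩⟩
    · intro j hj d _ hM
      by_cases hd : d = AV.wc n
      · subst hd
        rcases Nat.eq_zero_or_pos j with h0 | h1
        · exact hnomaj0 _ (h0 ▸ hM)
        · exact Nat.find_min hP hj ⟨h1, hM⟩
      · exact hnomajother j d hd hM
    · intro d _ hM
      by_cases hd : d = AV.wc n
      · subst hd; exact le_rfl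
      · exact absurd hM (hnomajother i0 d hd)
  refine ⟨hlen, hsw, hmaj, hother, hwwin, ?_⟩
  intro d hd
  rcases hd.2 with ⟨i, _, _, hM, _, _⟩ | ⟨hno, _⟩
  · by_contra hdw
    exact hnomajother i d hdw hM
  · exact absurd hwtop (hno (n+1) (by omega) _ (Finset.mem_univ _))
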